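/- Fix 1/2 ≤ τ < 1, K > 0, N > 0. With p = sqrt((N + K + Nτ + 1)² - 4τN(N+1)), q = K + N + 2KN - Nτ, F = (1 + q - p)/(2p), h = (1/2)(-1 + τ + (1 + K + N + (-1 + K - 2N)τ + Nτ²)/p), ℓ = (p - (τ-1)N - K - 1)/2, ∂h/∂K = τ(q+1)/p³, ∂F/∂K = N(1+N)((-1 + N(-1+τ))(-1+τ) + K(1+τ))/p³, ∂ℓ/∂K = (1 + K + N + Nτ - p)/(2p), the identity 2F/(2F+1) = (h/(∂h/∂K))·(∂F/∂K)/(1+F) + (1-τ)·(F/(∂h/∂K))·(∂ℓ/∂K)/((1+ℓ)ℓ) holds. -/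

import Mathlib

set_option maxHeartbeats 4000000 in
theorem key_identity_lossy (τ K N : ℝ) (hτ1 : 1/2 ≤ τ) (hτ2 : τ < 1)
    (hK : 0 < K) (hN : 0 < N)
    (p q F h ℓ dhdK dFdK dℓdK : ℝ)
    (hp : p = Real.sqrt ((N + K + N * τ + 1)^2 - 4 * τ * N * (N + 1)))
    (hq : q = K + N + 2 * K * N - N * τ)
    (hF : F = (1 + q - p) / (2 * p))
    (hh : h = (1/2) * (-1 + τ + (1 + K + N + (-1 + K - 2 * N) * τ + N * τ^2) / p))
    (hℓ : ℓ = (p - (τ - 1) * N - K - 1) / 2)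
    (hdh : dhdK = τ * (q + 1) / p^3)
    (hdF : dFdK = N * (1 + N) * ((-1 + N * (-1 + τ)) * (-1 + τ) + K * (1 + τ)) / p^3)
    (hdℓ : dℓdK = (1 + K + N + N * τ - p) / (2 * p)) :
    2 * F / (2 * F + 1)
      = (h / dhdK) * (dFdK / (1 + F))
        + (1 - τ) * (F / dhdK) * (dℓdK / ((1 + ℓ) * ℓ)) := by
  have h1τ : 0 < 1 - τ := by linarith
  have hEpos : 0 < (N + K + N * τ + 1)^2 - 4 * τ * N * (N + 1) := by
    have : (N + K + N * τ + 1)^2 - 4 * τ * N * (N + 1)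
        = (N - N*τ + 1)^2 + K^2 + 2*K*(N + N*τ + 1) := by ring
    rw [this]; positivity
  have hp0 : 0 < p := by rw [hp]; exact Real.sqrt_pos.mpr hEpos
  have hE : p^2 = (N + K + N * τ + 1)^2 - 4 * τ * N * (N + 1) := by
    rw [hp]; exact Real.sq_sqrt hEpos.le
  have hq1 : 0 < 1 + q := by rw [hq]; nlinarith
  have hτ0 : 0 < τ := by linarith
  have hℓ0 : 0 < ℓ := by
    rw [hℓ]
    have hgt : p > K + 1 - (1 - τ) * N := by
      nlinarith [sq_nonneg (p - (K + 1 - (1-τ)*N)), sq_nonneg (p + (K + 1 - (1-τ)*N))]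
    nlinarith
  have hℓ1 : 0 < 1 + ℓ := by linarith
  have hF1 : 0 < 2 * F + 1 := by
    have : 2 * F + 1 = (1 + q) / p := by rw [hF]; field_simp; ring
    rw [this]; positivity
  have hF2 : 0 < 1 + F := by linarith
  have hdh0 : dhdK ≠ 0 := by
    rw [hdh]; exact ne_of_gt (div_pos (mul_pos hτ0 (by linarith)) (by positivity))
  clear hp hEpos
  have hF1' := hF1.ne'
  have hF2' := hF2.ne'
  have hℓℓ : (1 + ℓ) * ℓ ≠ 0 := by positivity
  subst hq hF hh hℓ hdh hdF hdℓ
  have hA : (0:ℝ) < K + N + 2*K*N - N*τ + 1 := by nlinarith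
  have hB : (0:ℝ) < 2*p + (1 + (K + N + 2*K*N - N*τ) - p) := by nlinarith
  have hC : (0:ℝ) < p - (τ-1)*N - K - 1 := by linarith
  have hD : (0:ℝ) < 2 + (p - (τ-1)*N - K - 1) := by linarith
  have hB2 : (0:ℝ) < 2*(1 + (K + N + 2*K*N - N*τ) - p) + 2*p := by nlinarith
  field_simp [hp0.ne', hτ0.ne', hA.ne', hB.ne', hC.ne', hD.ne', hB2.ne']
  have hBB : (1 + (K + N + 2 * K * N - N * τ) - p + p) ≠ 0 := ne_of_gt (by linarith)
  have hEE : (p - N * (τ - 1) - K - 1) * (2 + (p - N * (τ - 1) - K - 1)) ≠ 0 :=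
    (mul_pos (by linarith) (by linarith)).ne'
  rw [add_div' _ _ _ hEE, div_eq_div_iff hBB hEE]
  linear_combination ((1:ℝ) * τ * N * p^2 + (-1:ℝ) * K * p^2 + (-1:ℝ) * N * p^2 + (-2:ℝ) * K * N * p^2 + (-1:ℝ) * p^2 + (1:ℝ) * τ * K^2 * p + (10:ℝ) * τ^2 * N^2 * p + (-11:ℝ) * τ * N^2 * p + (6:ℝ) * τ^2 * K * N^2 * p + (-14:ℝ) * τ * K * N^2 * p + (2:ℝ) * τ * K^2 * N * p + (-3:ℝ) * τ^3 * N^2 * p + (3:ℝ) * τ^2 * N * p + (-6:ℝ) * τ * N * p + (-2:ℝ) * τ^3 * K * N^3 * p + (-4:ℝ) * τ^3 * N^4 * p + (-2:ℝ) * τ^3 * K * N^4 * p + (1:ℝ) * τ^4 * N^4 * p + (-6:ℝ) * τ^3 * N^3 * p + (10:ℝ) * τ^2 * K * N^3 * p + (6:ℝ) * τ^2 * N^4 * p + (6:ℝ) * τ^2 * K * N^4 * p + (12:ℝ) * τ^2 * N^3 * p + (-14:ℝ) * τ * K * N^3 * p + (-4:ℝ) * τ * N^4 * p + (-6:ℝ)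 * τ * K * N^4 * p + (-10:ℝ) * τ * N^3 * p + (-3:ℝ) * τ^2 * K^2 * N^2 * p + (-2:ℝ) * τ^2 * K^2 * N^3 * p + (1:ℝ) * τ^4 * N^3 * p + (-6:ℝ) * τ * K * N * p + (-1:ℝ) * τ^2 * K^2 * N * p + (6:ℝ) * K * N^3 * p + (1:ℝ) * N^4 * p + (2:ℝ) * K * N^4 * p + (3:ℝ) * N^3 * p + (8:ℝ) * K * N^2 * p + (4:ℝ) * N^2 * p + (3:ℝ) * K^2 * N^2 * p + (2:ℝ) * K^2 * N^3 * p + (6:ℝ) * K * N * p + (3:ℝ) * N * p + (3:ℝ) * K^2 * N * p + (1:ℝ) * K^2 * p + (2:ℝ) * K * p + (1:ℝ) * p + (-1:ℝ) * τ * p + (-4:ℝ) * τ * K^3 * N + (-1:ℝ) * τ * K^2 + (13:ℝ) * τ * K * N^2 + (5:ℝ) * τ * K^2 * N^2 + (-11:ℝ) * τ^2 * K * N^2 + (6:ℝ) * τ * K * N + (-6:ℝ) * τ * K^3 * N^2 + (-6:ℝ) * τ^2 * K^2 * N^2 + (3:ℝ) * τ^3 * K * N^2 + (-3:ℝ) *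 τ^2 * K * N + (1:ℝ) * τ * K + (12:ℝ) * τ * K * N^3 + (15:ℝ) * τ * K^2 * N^3 + (-10:ℝ) * τ^2 * K * N^3 + (-2:ℝ) * τ^2 * N^2 + (-4:ℝ) * τ * K^3 * N^3 + (-15:ℝ) * τ^2 * K^2 * N^3 + (4:ℝ) * τ^3 * K * N^3 + (-2:ℝ) * τ^2 * N + (1:ℝ) * τ + (1:ℝ) * τ^4 * K * N^4 + (5:ℝ) * τ^4 * N^5 + (2:ℝ) * τ^4 * K * N^5 + (-1:ℝ) * τ^5 * N^5 + (6:ℝ) * τ^4 * N^4 + (-4:ℝ) * τ^3 * K * N^4 + (-10:ℝ) * τ^3 * N^5 + (-8:ℝ) * τ^3 * K * N^5 + (-14:ℝ) * τ^3 * N^4 + (5:ℝ) * τ^3 * K^2 * N^3 + (4:ℝ) * τ^3 * K^2 * N^4 + (6:ℝ) * τ^2 * K * N^4 + (10:ℝ) * τ^2 * N^5 + (12:ℝ) * τ^2 * K * N^5 + (16:ℝ) * τ^2 * N^4 + (-12:ℝ) * τ^2 * K^2 * N^4 + (-6:ℝ) * τ^3 * N^3 + (6:ℝ) * τ^2 *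 N^3 + (-4:ℝ) * τ * K * N^4 + (-5:ℝ) * τ * N^5 + (-8:ℝ) * τ * K * N^5 + (-9:ℝ) * τ * N^4 + (12:ℝ) * τ * K^2 * N^4 + (-2:ℝ) * τ * N^3 + (3:ℝ) * τ^2 * K^3 * N^2 + (2:ℝ) * τ^2 * K^3 * N^3 + (-1:ℝ) * τ^4 * K * N^3 + (-1:ℝ) * τ^5 * N^4 + (2:ℝ) * τ^4 * N^3 + (1:ℝ) * τ^3 * K^2 * N^2 + (1:ℝ) * τ^2 * K^3 * N + (1:ℝ) * K * N^4 + (1:ℝ) * N^5 + (2:ℝ) * K * N^5 + (2:ℝ) * N^4 + (-5:ℝ) * K^2 * N^3 + (-4:ℝ) * K^2 * N^4 + (-5:ℝ) * K * N^3 + (-5:ℝ) * K * N^2 + (3:ℝ) * K^3 * N^2 + (2:ℝ) * K^3 * N^3 + (1:ℝ) * K^2 * N + (-1:ℝ) * K * N + (1:ℝ) * K^3 * N + (-2:ℝ) * N^2 + (-1:ℝ) * N + (-1:ℝ) * τ * K^3 + (-1:ℝ) * τ * K^2 * N + (3:ℝ) * τ * N + (4:ℝ) * τ * N^2) * hE
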